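/- arXiv:1308.5425 — 2 statements merged into one kernel-verified Lean document; each statement's English description precedes it below -/
import Mathlib

section
/- Let X and Y be Hilbert spaces with Y ⊆ X and ‖y‖_X ≤ ‖y‖_Y for all y ∈ Y. Let L be a closed symmetric operator on X with dense domain D(L), Y ⊆ D(L) ⊆ X. Let π₀ be the orthogonal projection onto ker L and π₁ = Id - π₀. Suppose there is an operator Q : (ker L)^⊥ → Y ∩ (ker L)^⊥ with L Q π₁ = π₁ and ‖Q π₁ x‖_Y ≤ C ‖x‖_X for all x. Then there exists ε > 0 such that L - μ·Id : D(L) → X is bijective for all real μ with 0 < |μ| < ε, and consequently (L, D(L)) is self-adjoint. -/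
open InnerProductSpace

local notation "⟪" x ", " y "⟫" => @inner ℂ _ _ x y

/-- Let `X` and `Y` be Hilbert spaces with `Y ⊆ X` (realized by an injective
linear embedding `ι : Y → X` with `‖ι y‖_X ≤ ‖y‖_Y`).  Let `L` (here `T`) be a closed symmetric
operator on `X` with dense domain `D(L)` containing `Y`.  Let `π₀` be the orthogonal projection
onto `ker L` (membership and orthogonality hypotheses below) and `π₁ = Id - π₀`.  Suppose
`Q : X → Y` satisfies `L Q π₁ = π₁`, takes values (after `π₁`) in `(ker L)ᗮ`, and
`‖Q π₁ x‖_Y ≤ C ‖x‖_X`.  Then there is `ε > 0` such that `L - μ·Id : D(L) → X` is bijective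
for every real `μ` with `0 < |μ| < ε`, and consequently `(L, D(L))` is self-adjoint. -/
theorem resolvent_lemma_selfadjoint
    (X : Type*) [NormedAddCommGroup X] [InnerProductSpace ℂ X] [CompleteSpace X]
    (Y : Type*) [NormedAddCommGroup Y] [InnerProductSpace ℂ Y] [CompleteSpace Y]
    (ι : Y →ₗ[ℂ] X) (hι_inj : Function.Injective ι)
    (hι_norm : ∀ y : Y, ‖ι y‖ ≤ ‖y‖)
    (T : X →ₗ.[ℂ] X)
    (hdense : Dense (T.domain : Set X))
    (hsym : ∀ x y : T.domain, ⟪T x, (y : X)⟫ = ⟪(x : X), T y⟫)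
    (hclosed : T.IsClosed)
    (hYdom : ∀ y : Y, ι y ∈ T.domain)
    -- the kernel of `L` as a subspace of `X`
    (K : Submodule ℂ X)
    (hK : K = Submodule.map T.domain.subtype (LinearMap.ker T.toFun))
    -- `π₀` is the orthogonal projection onto `ker L`
    (π₀ : X →L[ℂ] X)
    (hπ₀mem : ∀ x : X, π₀ x ∈ K)
    (hπ₀orth : ∀ x : X, x - π₀ x ∈ Kᗮ)
    -- the operator `Q`, with `L Q π₁ = π₁`, values in `Y ∩ (ker L)ᗮ`, and the `Y`-norm bound
    (Q : X →ₗ[ℂ] Y)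
    (hQorth : ∀ x : X, ι (Q (x - π₀ x)) ∈ Kᗮ)
    (hLQ : ∀ x : X, T ⟨ι (Q (x - π₀ x)), hYdom _⟩ = x - π₀ x)
    (C : ℝ)
    (hQbound : ∀ x : X, ‖Q (x - π₀ x)‖ ≤ C * ‖x‖) :
    (∃ ε > (0 : ℝ), ∀ μ : ℝ, 0 < |μ| → |μ| < ε →
      Function.Bijective (fun x : T.domain => T x - (μ : ℂ) • (x : X))) ∧
    IsSelfAdjoint T := by
  classical
  set C' : ℝ := max C 1 with hC'def
  have hC'pos : (0:ℝ) < C' := lt_of_lt_of_le one_pos (le_max_right C 1)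
  -- the bounded right inverse `R x = ι (Q (x - π₀ x))`
  have hRbound : ∀ x : X, ‖ι (Q (x - π₀ x))‖ ≤ C' * ‖x‖ := by
    intro x
    refine (hι_norm _).trans ((hQbound x).trans ?_)
    exact mul_le_mul_of_nonneg_right (le_max_left C 1) (norm_nonneg x)
  set Rlin : X →ₗ[ℂ] X := ι ∘ₗ Q ∘ₗ (LinearMap.id - (π₀ : X →ₗ[ℂ] X)) with hRlin
  have hRlin_apply : ∀ x : X, Rlin x = ι (Q (x - π₀ x)) := fun x => rfl
  set R : X →L[ℂ] X := LinearMap.mkContinuous Rlin C' (fun x => hRbound x) with hRdef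
  have hRapply : ∀ x : X, R x = ι (Q (x - π₀ x)) := fun x => rfl
  have hRnorm : ‖R‖ ≤ C' := LinearMap.mkContinuous_norm_le _ hC'pos.le _
  -- membership of `K` in the domain, with `T = 0` there
  have hKdom : ∀ z ∈ K, z ∈ T.domain := by
    intro z hz
    rw [hK] at hz
    obtain ⟨k, _, rfl⟩ := hz
    exact k.2
  have hTK : ∀ (z : X) (hz : z ∈ T.domain), z ∈ K → T ⟨z, hz⟩ = 0 := by
    intro z hz hzK
    rw [hK] at hzK
    obtain ⟨k, hk, hkz⟩ := hzK
    have : (⟨z, hz⟩ : T.domain) = k := Subtype.ext hkz.symm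
    rw [this]
    exact hk
  -- the range of `T` is orthogonal to `K`
  have hTorth : ∀ u : T.domain, T u ∈ Kᗮ := by
    intro u
    rw [Submodule.mem_orthogonal]
    intro k hk
    have hkd : k ∈ T.domain := hKdom k hk
    have h1 : ⟪T ⟨k, hkd⟩, (u : X)⟫ = ⟪k, T u⟫ := hsym ⟨k, hkd⟩ u
    rw [hTK k hkd hk] at h1
    rw [← h1, inner_zero_left]
  -- `π₀` vanishes on `Kᗮ`
  have hπ₀zero : ∀ w ∈ Kᗮ, π₀ w = 0 := by
    intro w hw
    have h1 : π₀ w ∈ Kᗮ := by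
      have : π₀ w = w - (w - π₀ w) := by abel
      rw [this]
      exact Submodule.sub_mem _ hw (hπ₀orth w)
    exact (Submodule.disjoint_def.mp K.orthogonal_disjoint) _ (hπ₀mem w) h1
  set ε : ℝ := (C')⁻¹ with hεdef
  have hεpos : 0 < ε := inv_pos.mpr hC'pos
  -- Surjectivity
  have hSurj : ∀ μ : ℝ, 0 < |μ| → |μ| < ε →
      Function.Surjective (fun x : T.domain => T x - (μ : ℂ) • (x : X)) := by
    intro μ hμ0 hμε x
    have hμne : (μ : ℂ) ≠ 0 := by
      simp only [ne_eq, Complex.ofReal_eq_zero]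
      exact fun h => by simp [h] at hμ0
    have hμC : |μ| * C' < 1 := by
      rw [hεdef] at hμε
      calc |μ| * C' < (C')⁻¹ * C' := mul_lt_mul_of_pos_right hμε hC'pos
        _ = 1 := inv_mul_cancel₀ hC'pos.ne'
    have hAnorm : ‖(μ : ℂ) • R‖ < 1 := by
      rw [norm_smul, Complex.norm_real, Real.norm_eq_abs]
      calc |μ| * ‖R‖ ≤ |μ| * C' := mul_le_mul_of_nonneg_left hRnorm (abs_nonneg μ)
        _ < 1 := hμC
    set u1 : (X →L[ℂ] X)ˣ := Units.oneSub ((μ : ℂ) • R) hAnorm with hu1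
    set w : X := ((↑u1⁻¹ : X →L[ℂ] X)) (x - π₀ x) with hwdef
    have hw : w - (μ : ℂ) • R w = x - π₀ x := by
      have h1 : ((↑u1 : X →L[ℂ] X) * (↑u1⁻¹ : X →L[ℂ] X)) (x - π₀ x) = x - π₀ x := by
        rw [u1.mul_inv]; rfl
      rw [ContinuousLinearMap.mul_apply] at h1
      have h2 : (↑u1 : X →L[ℂ] X) w = w - (μ : ℂ) • R w := by
        show (1 - (μ : ℂ) • R) w = _
        simp
      rw [← h2]; exact h1
    have hworth : w ∈ Kᗮ := by
      have : w = (x - π₀ x) + (μ : ℂ) • R w := by rw [← hw]; abel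
      rw [this]
      exact Submodule.add_mem _ (hπ₀orth x) (Submodule.smul_mem _ _ (by rw [hRapply]; exact hQorth w))
    have hπ₀w : π₀ w = 0 := hπ₀zero w hworth
    -- the preimage
    have hmem1 : R w ∈ T.domain := by rw [hRapply]; exact hYdom _
    have hmem2 : π₀ x ∈ T.domain := hKdom _ (hπ₀mem x)
    refine ⟨⟨R w, hmem1⟩ - (μ : ℂ)⁻¹ • ⟨π₀ x, hmem2⟩, ?_⟩
    show T (⟨R w, hmem1⟩ - (μ : ℂ)⁻¹ • ⟨π₀ x, hmem2⟩) - (μ : ℂ) • ((_ : T.domain) : X) = x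
    rw [T.map_sub, T.map_smul]
    have hT1 : T ⟨R w, hmem1⟩ = w - π₀ w := by
      have : (⟨R w, hmem1⟩ : T.domain) = ⟨ι (Q (w - π₀ w)), hYdom _⟩ := Subtype.ext (hRapply w)
      rw [this]; exact hLQ w
    have hT2 : T ⟨π₀ x, hmem2⟩ = 0 := hTK _ hmem2 (hπ₀mem x)
    rw [hT1, hT2, hπ₀w, smul_zero, sub_zero, sub_zero]
    have hcoe : ((⟨R w, hmem1⟩ - (μ : ℂ)⁻¹ • ⟨π₀ x, hmem2⟩ : T.domain) : X)
        = R w - (μ : ℂ)⁻¹ • π₀ x := rfl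
    rw [hcoe, smul_sub, smul_smul, mul_inv_cancel₀ hμne, one_smul]
    calc w - ((μ : ℂ) • R w - π₀ x) = (w - (μ : ℂ) • R w) + π₀ x := by abel
      _ = (x - π₀ x) + π₀ x := by rw [hw]
      _ = x := by abel
  -- Injectivity
  have hInj : ∀ μ : ℝ, 0 < |μ| → |μ| < ε →
      Function.Injective (fun x : T.domain => T x - (μ : ℂ) • (x : X)) := by
    intro μ hμ0 hμε u v huv
    simp only at huv
    have hμne : (μ : ℂ) ≠ 0 := by
      simp only [ne_eq, Complex.ofReal_eq_zero]
      exact fun h => by simp [h] at hμ0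
    set d : T.domain := u - v with hddef
    have hTd : T d = (μ : ℂ) • (d : X) := by
      have h' : T u - T v = (μ : ℂ) • (u : X) - (μ : ℂ) • (v : X) :=
        sub_eq_sub_iff_sub_eq_sub.mp huv
      have hc : ((u - v : T.domain) : X) = (u : X) - (v : X) := rfl
      rw [hddef, T.map_sub, h', hc, smul_sub]
    have hdorth : (d : X) ∈ Kᗮ := by
      have h1 : (μ : ℂ) • (d : X) ∈ Kᗮ := hTd ▸ hTorth d
      have h2 : (d : X) = (μ : ℂ)⁻¹ • ((μ : ℂ) • (d : X)) := by
        rw [smul_smul, inv_mul_cancel₀ hμne, one_smul]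
      rw [h2]
      exact Submodule.smul_mem _ _ h1
    have hπ₀Td : π₀ (T d) = 0 := hπ₀zero _ (hTorth d)
    set v' : T.domain := ⟨ι (Q (T d - π₀ (T d))), hYdom _⟩ with hv'def
    have hTv' : T v' = T d := by
      rw [hv'def, hLQ (T d), hπ₀Td, sub_zero]
    have hdv'K : ((d - v' : T.domain) : X) ∈ K := by
      rw [hK]
      refine ⟨d - v', LinearMap.mem_ker.mpr ?_, rfl⟩
      show T (d - v') = 0
      rw [T.map_sub, hTv', sub_self]
    have hv'orth : (v' : X) ∈ Kᗮ := by
      show ι (Q (T d - π₀ (T d))) ∈ Kᗮ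
      exact hQorth (T d)
    have hdv'orth : ((d - v' : T.domain) : X) ∈ Kᗮ := by
      have : ((d - v' : T.domain) : X) = (d : X) - v' := rfl
      rw [this]
      exact Submodule.sub_mem _ hdorth hv'orth
    have hdv0 : ((d - v' : T.domain) : X) = 0 :=
      (Submodule.disjoint_def.mp K.orthogonal_disjoint) _ hdv'K hdv'orth
    have hdv : (d : X) = (v' : X) := by
      have h : ((d - v' : T.domain) : X) = (d : X) - v' := rfl
      rw [h] at hdv0
      exact sub_eq_zero.mp hdv0
    -- norm estimate forces d = 0
    have hnorm : ‖(d : X)‖ ≤ C' * (|μ| * ‖(d : X)‖) := by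
      calc ‖(d : X)‖ = ‖ι (Q (T d - π₀ (T d)))‖ := by rw [hdv]
        _ ≤ C' * ‖T d‖ := hRbound (T d)
        _ = C' * (|μ| * ‖(d : X)‖) := by
            rw [hTd, norm_smul, Complex.norm_real, Real.norm_eq_abs]
    have hμC : |μ| * C' < 1 := by
      rw [hεdef] at hμε
      calc |μ| * C' < (C')⁻¹ * C' := mul_lt_mul_of_pos_right hμε hC'pos
        _ = 1 := inv_mul_cancel₀ hC'pos.ne'
    have hd0 : (d : X) = 0 := by
      by_contra hne
      have hpos : 0 < ‖(d : X)‖ := norm_pos_iff.mpr hne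
      nlinarith [hnorm, hμC, hpos]
    have : d = 0 := Subtype.ext hd0
    rw [hddef] at this
    exact sub_eq_zero.mp this
  -- assemble
  have hbij : ∀ μ : ℝ, 0 < |μ| → |μ| < ε →
      Function.Bijective (fun x : T.domain => T x - (μ : ℂ) • (x : X)) :=
    fun μ h1 h2 => ⟨hInj μ h1 h2, hSurj μ h1 h2⟩
  refine ⟨⟨ε, hεpos, hbij⟩, ?_⟩
  -- self-adjointness
  rw [LinearPMap.isSelfAdjoint_def]
  have hFA : T.IsFormalAdjoint T := fun x y => hsym x y
  have hle : T ≤ T.adjoint := hFA.le_adjoint hdense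
  -- fix a spectral parameter
  set μ : ℝ := ε / 2 with hμdef
  have hμ0 : 0 < |μ| := by rw [hμdef, abs_of_pos (by linarith)]; linarith
  have hμε : |μ| < ε := by rw [hμdef, abs_of_pos (by linarith)]; linarith
  have hsurj := hSurj μ hμ0 hμε
  have hFA' : T.adjoint.IsFormalAdjoint T := T.adjoint_isFormalAdjoint hdense
  have key : ∀ y : T.adjoint.domain, ∃ u : T.domain, (y : X) = (u : X) ∧ T.adjoint y = T u := by
    intro y
    obtain ⟨u, hu⟩ := hsurj ((T.adjoint y : X) - (μ : ℂ) • (y : X))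
    simp only at hu
    have horth : ∀ x : T.domain, ⟪T x - (μ : ℂ) • (x : X), (y : X) - (u : X)⟫ = 0 := by
      intro x
      have e1 : ⟪T x, (y : X)⟫ = ⟪(x : X), T.adjoint y⟫ := by
        have := hFA' y x
        calc ⟪T x, (y : X)⟫ = (starRingEnd ℂ) ⟪(y : X), T x⟫ := (inner_conj_symm _ _).symm
          _ = (starRingEnd ℂ) ⟪T.adjoint y, (x : X)⟫ := by rw [this]
          _ = ⟪(x : X), T.adjoint y⟫ := inner_conj_symm _ _
      have e2 : ⟪T x, (u : X)⟫ = ⟪(x : X), T u⟫ := hsym x u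
      have e3 : ((starRingEnd ℂ) ((μ : ℝ) : ℂ)) = ((μ : ℝ) : ℂ) := Complex.conj_ofReal μ
      calc ⟪T x - (μ : ℂ) • (x : X), (y : X) - (u : X)⟫
          = ⟪T x, (y : X)⟫ - ⟪T x, (u : X)⟫
            - (((μ:ℝ):ℂ) * ⟪(x : X), (y : X)⟫ - ((μ:ℝ):ℂ) * ⟪(x : X), (u : X)⟫) := by
            simp only [inner_sub_left, inner_sub_right, inner_smul_left, e3]; ring
        _ = ⟪(x : X), T.adjoint y - (μ : ℂ) • (y : X)⟫
            - ⟪(x : X), T u - (μ : ℂ) • (u : X)⟫ := by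
            rw [inner_sub_right, inner_sub_right, inner_smul_right, inner_smul_right, e1, e2]
            ring
        _ = 0 := by rw [hu, sub_self]
    have hyu : (y : X) - (u : X) = 0 := by
      obtain ⟨x, hx⟩ := hsurj ((y : X) - (u : X))
      simp only at hx
      have := horth x
      rw [hx] at this
      exact inner_self_eq_zero.mp this
    have hyu' : (y : X) = (u : X) := sub_eq_zero.mp hyu
    refine ⟨u, hyu', ?_⟩
    have h : T.adjoint y - (μ : ℂ) • (y : X) = T u - (μ : ℂ) • (u : X) := hu.symm
    rw [hyu'] at h
    have := sub_left_inj.mp h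
    exact this
  have hge : T.adjoint ≤ T := by
    constructor
    · intro z hz
      obtain ⟨u, hu1, _⟩ := key ⟨z, hz⟩
      simp only [Subtype.coe_mk] at hu1
      rw [show z = (u : X) from hu1]
      exact u.2
    · intro a b hab
      obtain ⟨u, hu1, hu2⟩ := key a
      have hbu : b = u := Subtype.ext (by rw [← hab, hu1])
      rw [hu2, hbu]
  exact le_antisymm hge hle
end

section
/- Under the hypotheses of the previous resolvent lemma, for 0 < |μ| < C⁻¹ the operator R_μ x = Q (∑_{j=0}^∞ (μ Q)^j π₁ x) - μ⁻¹ π₀ x is well defined (the series converges in Y), takes values in D(L), and satisfies (L - μ) R_μ x = x for every x ∈ X. -/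
open InnerProductSpace

local notation "⟪" x ", " y "⟫" => @inner ℂ _ _ x y

/-- Under the hypotheses of the resolvent lemma (Statement 1), for
`0 < |μ| < C⁻¹` the operator `R_μ x = Q (∑_{j=0}^∞ (μ Q)^j π₁ x) - μ⁻¹ π₀ x` is well
defined (the series converges in `Y`), takes values in `D(L)`, and satisfies
`(L - μ) R_μ x = x` for every `x ∈ X`. -/
theorem resolvent_series_formula
    (X : Type*) [NormedAddCommGroup X] [InnerProductSpace ℂ X] [CompleteSpace X]
    (Y : Type*) [NormedAddCommGroup Y] [InnerProductSpace ℂ Y] [CompleteSpace Y]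
    (ι : Y →ₗ[ℂ] X) (hι_inj : Function.Injective ι)
    (hι_norm : ∀ y : Y, ‖ι y‖ ≤ ‖y‖)
    (T : X →ₗ.[ℂ] X)
    (hdense : Dense (T.domain : Set X))
    (hsym : ∀ x y : T.domain, ⟪T x, (y : X)⟫ = ⟪(x : X), T y⟫)
    (hclosed : T.IsClosed)
    (hYdom : ∀ y : Y, ι y ∈ T.domain)
    (K : Submodule ℂ X)
    (hK : K = Submodule.map T.domain.subtype (LinearMap.ker T.toFun))
    (π₀ : X →L[ℂ] X)
    (hπ₀mem : ∀ x : X, π₀ x ∈ K)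
    (hπ₀orth : ∀ x : X, x - π₀ x ∈ Kᗮ)
    (Q : X →ₗ[ℂ] Y)
    (hQorth : ∀ x : X, ι (Q (x - π₀ x)) ∈ Kᗮ)
    (hπ₀Q : ∀ x : X, π₀ (ι (Q x)) = 0)
    (hLQ : ∀ x : X, T ⟨ι (Q (x - π₀ x)), hYdom _⟩ = x - π₀ x)
    (C : ℝ) (hC : 0 < C)
    (hQbound : ∀ x : X, ‖Q (x - π₀ x)‖ ≤ C * ‖x‖)
    (μ : ℝ) (hμ₀ : 0 < |μ|) (hμC : |μ| < C⁻¹) :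
    ∀ x : X, ∃ y : Y,
      -- the series `∑_j (μ Q)^j π₁ x`, mapped by `Q`, converges in `Y`
      HasSum (fun j : ℕ => ((μ : ℂ)) ^ j • Q (((ι ∘ₗ Q : X →ₗ[ℂ] X) ^ j) (x - π₀ x))) y ∧
      -- `R_μ x = Q(∑ ...) - μ⁻¹ π₀ x` lies in the domain of `L`
      ∃ hm : ι y - ((μ : ℂ))⁻¹ • π₀ x ∈ T.domain,
        -- and `(L - μ) R_μ x = x`
        T ⟨ι y - ((μ : ℂ))⁻¹ • π₀ x, hm⟩
          - (μ : ℂ) • (ι y - ((μ : ℂ))⁻¹ • π₀ x) = x := by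
  intro x
  set P : X →ₗ[ℂ] X := (ι ∘ₗ Q : X →ₗ[ℂ] X) with hP
  set u : X := x - π₀ x with hu
  set v : ℕ → X := fun j => (P ^ j) u with hv
  -- π₀ vanishes on Kᗮ
  have hπ₀perp : ∀ z : X, z ∈ Kᗮ → π₀ z = 0 := by
    intro z hz
    have h1 : π₀ z ∈ Kᗮ := by
      have := Kᗮ.sub_mem hz (hπ₀orth z)
      simpa using this
    have h2 := (Submodule.mem_orthogonal _ _).mp h1 _ (hπ₀mem z)
    simpa [inner_self_eq_zero] using h2
  have hv0 : v 0 = u := by simp [hv]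
  have hv_succ : ∀ j, v (j + 1) = ι (Q (v j)) := by
    intro j
    simp [hv, pow_succ', Module.End.mul_apply, hP]
  have hv_perp : ∀ j, v j ∈ Kᗮ := by
    intro j
    induction j with
    | zero => rw [hv0, hu]; exact hπ₀orth x
    | succ j ih =>
      have h0 : π₀ (v j) = 0 := hπ₀perp _ ih
      have := hQorth (v j)
      rw [h0, sub_zero] at this
      rw [hv_succ j]; exact this
  have hπ₀v : ∀ j, π₀ (v j) = 0 := fun j => hπ₀perp _ (hv_perp j)
  have hsubv : ∀ j, v j - π₀ (v j) = v j := fun j => by rw [hπ₀v j, sub_zero]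
  have hQvbound : ∀ j, ‖Q (v j)‖ ≤ C * ‖v j‖ := by
    intro j
    have := hQbound (v j)
    rwa [hsubv j] at this
  have hvnorm : ∀ j, ‖v j‖ ≤ C ^ j * ‖u‖ := by
    intro j
    induction j with
    | zero => simp [hv0]
    | succ j ih =>
      have h1 : ‖v (j + 1)‖ ≤ C * ‖v j‖ := by
        rw [hv_succ j]
        exact le_trans (hι_norm _) (hQvbound j)
      calc ‖v (j + 1)‖ ≤ C * ‖v j‖ := h1
        _ ≤ C * (C ^ j * ‖u‖) := by
            exact mul_le_mul_of_nonneg_left ih hC.le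
        _ = C ^ (j + 1) * ‖u‖ := by ring
  have hμC1 : |μ| * C < 1 := by
    have := mul_lt_mul_of_pos_right hμC hC
    rwa [inv_mul_cancel₀ hC.ne'] at this
  -- the series terms
  set f : ℕ → Y := fun j => ((μ : ℂ)) ^ j • Q (v j) with hf
  have hnormf : ∀ j, ‖f j‖ ≤ (C * ‖u‖) * (|μ| * C) ^ j := by
    intro j
    have h1 : ‖f j‖ = |μ| ^ j * ‖Q (v j)‖ := by
      simp [hf, norm_smul, norm_pow, Complex.norm_real, Real.norm_eq_abs]
    rw [h1]
    calc |μ| ^ j * ‖Q (v j)‖ ≤ |μ| ^ j * (C * (C ^ j * ‖u‖)) := by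
          refine mul_le_mul_of_nonneg_left ?_ (by positivity)
          exact le_trans (hQvbound j) (mul_le_mul_of_nonneg_left (hvnorm j) hC.le)
      _ = (C * ‖u‖) * (|μ| * C) ^ j := by rw [mul_pow]; ring
  have hsummf : Summable f := by
    refine Summable.of_norm_bounded (Summable.mul_left _
      (summable_geometric_of_lt_one (by positivity) hμC1)) hnormf
  set y : Y := ∑' j, f j with hy
  have hHf : HasSum f y := hsummf.hasSum
  refine ⟨y, hHf, ?_⟩
  -- ι as a continuous linear map
  set ι' : Y →L[ℂ] X := LinearMap.mkContinuous ι 1 (fun z => by simpa using hι_norm z) with hι'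
  have hι'app : ∀ z : Y, ι' z = ι z := fun z => rfl
  set g : ℕ → X := fun j => ((μ : ℂ)) ^ j • v j with hg
  have hshift : ∀ j, (μ : ℂ) • ι (f j) = g (j + 1) := by
    intro j
    simp only [hf, hg, map_smul, hv_succ j, smul_smul, pow_succ']
  have hHg : HasSum g ((μ : ℂ) • ι y + u) := by
    have h1 : HasSum (fun j => ι' (f j)) (ι' y) := hHf.mapL ι'
    have h2 : HasSum (fun j => (μ : ℂ) • ι' (f j)) ((μ : ℂ) • ι' y) := h1.const_smul _
    have h3 : HasSum (fun j => g (j + 1)) ((μ : ℂ) • ι y) := by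
      convert h2 using 2 with j
      · exact (hshift j).symm
      · exact (hι'app y).symm
    have h4 := (hasSum_nat_add_iff 1).mp h3
    simpa [hg, hv0] using h4
  set w : X := (μ : ℂ) • ι y + u with hw
  -- value of T on the series terms
  have h1 : ∀ j, T ⟨ι (Q (v j)), hYdom _⟩ = v j := by
    intro j
    have e : (⟨ι (Q (v j - π₀ (v j))), hYdom _⟩ : T.domain) = ⟨ι (Q (v j)), hYdom _⟩ :=
      Subtype.ext (by rw [hsubv j])
    have h2 := hLQ (v j)
    rw [e, hsubv j] at h2
    exact h2
  have hTf : ∀ j, T ⟨ι (f j), hYdom _⟩ = g j := by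
    intro j
    have e : (⟨ι (f j), hYdom _⟩ : T.domain)
        = ((μ : ℂ)) ^ j • ⟨ι (Q (v j)), hYdom _⟩ := Subtype.ext (by simp [hf, map_smul])
    rw [e, T.map_smul, h1 j]
  have hmemp : ∀ j, ((ι (f j), g j) : X × X) ∈ T.graph := by
    intro j
    have := T.mem_graph ⟨ι (f j), hYdom _⟩
    rwa [hTf j] at this
  have hpair : HasSum (fun j => ((ι (f j), g j) : X × X)) (ι y, w) := by
    have h1 : HasSum (fun j => ι (f j)) (ι y) := hHf.mapL ι'
    exact h1.prodMk hHg
  have hgraph : ((ι y, w) : X × X) ∈ T.graph := by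
    have hc : IsClosed (T.graph : Set (X × X)) := hclosed
    refine hc.mem_of_tendsto hpair.tendsto_sum_nat
      (Filter.Eventually.of_forall fun n => ?_)
    exact Submodule.sum_mem _ fun j _ => hmemp j
  have hTy : T ⟨ι y, hYdom y⟩ = w := by
    obtain ⟨z, hz1, hz2⟩ := (T.mem_graph_iff).mp hgraph
    have hzz : z = ⟨ι y, hYdom y⟩ := Subtype.ext hz1
    rw [← hzz]; exact hz2
  -- π₀ x is in the kernel part
  obtain ⟨k, hk, hkx⟩ := Submodule.mem_map.mp (hK ▸ hπ₀mem x)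
  have hdom0 : π₀ x ∈ T.domain := by rw [← hkx]; exact k.2
  have hT0 : T ⟨π₀ x, hdom0⟩ = 0 := by
    have hzz : (⟨π₀ x, hdom0⟩ : T.domain) = k := Subtype.ext hkx.symm
    rw [hzz]
    exact LinearMap.mem_ker.mp hk
  have hm : ι y - ((μ : ℂ))⁻¹ • π₀ x ∈ T.domain :=
    Submodule.sub_mem _ (hYdom y) (Submodule.smul_mem _ _ hdom0)
  refine ⟨hm, ?_⟩
  have hdec : (⟨ι y - ((μ : ℂ))⁻¹ • π₀ x, hm⟩ : T.domain)
      = ⟨ι y, hYdom y⟩ - ((μ : ℂ))⁻¹ • ⟨π₀ x, hdom0⟩ := Subtype.ext rfl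
  rw [hdec, T.map_sub, T.map_smul, hTy, hT0, smul_zero, sub_zero]
  have hμne : (μ : ℂ) ≠ 0 := by
    simpa [Complex.ofReal_eq_zero] using (abs_pos.mp hμ₀)
  rw [hw, hu, smul_sub, smul_smul, mul_inv_cancel₀ hμne, one_smul]
  abel
end
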